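/- Let s : ℤ^ℓ × ℕ → A be a series which is not identically zero and which has bounded pole order: there exists N ∈ ℕ such that s(b,p) = 0 unless b ≥ p·k − N·δ, where δ = (1,...,1) ∈ ℤ^ℓ. Then s admits a primitive expression: there exist a finite subset T ⊆ ℤ^ℓ × ℕ and, for each (m,j) ∈ T, a function g_{m,j} : ℕ^ℓ × ℕ → A with g_{m,j}(0,0) ≠ 0, such that the associated series Σ equals s. -/

import Mathlib

/-- Finite basis for a partially well-ordered set. -/
theorem pwo_exists_finite_basis {α : Type*} {S : Set α} {r : α → α → Prop}
    (h : S.PartiallyWellOrderedOn r) :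
    ∃ T : Finset α, ↑T ⊆ S ∧ ∀ x ∈ S, ∃ t ∈ T, r t x := by
  classical
  by_contra H
  push_neg at H
  have H' : ∀ T : Finset α, ↑T ⊆ S → ∃ x, x ∈ S ∧ ∀ t ∈ T, ¬ r t x := by
    intro T hT
    obtain ⟨x, hxS, hx⟩ := H T hT
    exact ⟨x, hxS, fun t ht hrt => hx t ht hrt⟩
  let pick : {T : Finset α // ↑T ⊆ S} → α := fun T => (H' T.1 T.2).choose
  have pick_mem : ∀ T, pick T ∈ S := fun T => (H' T.1 T.2).choose_spec.1
  have pick_not : ∀ T, ∀ t ∈ T.1, ¬ r t (pick T) := fun T => (H' T.1 T.2).choose_spec.2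
  let F : ℕ → {T : Finset α // ↑T ⊆ S} := fun n =>
    Nat.rec ⟨∅, by simp⟩ (fun _ T => ⟨insert (pick T) T.1, by
      intro x hx
      simp only [Finset.coe_insert, Set.mem_insert_iff] at hx
      rcases hx with h | h
      · exact h ▸ pick_mem T
      · exact T.2 h⟩) n
  let f : ℕ → α := fun n => pick (F n)
  have hFsucc : ∀ n, (F (n+1)).1 = insert (f n) (F n).1 := fun n => rfl
  have hmem : ∀ m n, m < n → f m ∈ (F n).1 := by
    intro m n hmn
    induction n with
    | zero => omega
    | succ n ih =>
      rw [hFsucc, Finset.mem_insert]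
      rcases Nat.lt_succ_iff_lt_or_eq.mp hmn with h | h
      · exact Or.inr (ih h)
      · exact Or.inl (by rw [h])
  obtain ⟨m, n, hmn, hr⟩ := h.exists_lt (fun n => pick_mem (F n))
  exact pick_not (F n) (f m) (hmem m n hmn) hr

/-- The Laurent-type series (encoded by its coefficient function on `ℤ^ℓ × ℕ`, the value at
`(b, p)` being the coefficient of `x^b (τ x^{-k})^p`) associated to the formal sum
`∑_{(m,j) ∈ T} g_{m,j}(x,τ) · x^m · (τ x^{-k})^j`. -/
def assocSeries {ℓ : ℕ} {A : Type*} [CommRing A] (k : Fin ℓ → ℕ)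
    (T : Finset ((Fin ℓ → ℤ) × ℕ))
    (g : (Fin ℓ → ℤ) × ℕ → ((Fin ℓ → ℕ) × ℕ) → A) :
    ((Fin ℓ → ℤ) × ℕ) → A := fun bp =>
  ∑ mj ∈ T,
    if mj.2 ≤ bp.2 ∧ ∀ i, mj.1 i + ((bp.2 - mj.2 : ℕ) : ℤ) * (k i : ℤ) ≤ bp.1 i then
      g mj (fun i => (bp.1 i - mj.1 i - ((bp.2 - mj.2 : ℕ) : ℤ) * (k i : ℤ)).toNat,
             bp.2 - mj.2)
    else 0

/-- coefficient form of Lemma 14.5.1.21.  A nonzero series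
`s : ℤ^ℓ × ℕ → A` with bounded pole order (there is `N` such that `s (b, p) = 0` unless
`b ≥ p·k − N·δ`, `δ = (1,…,1)`) admits a primitive expression: there is a finite
`T ⊆ ℤ^ℓ × ℕ` and coefficient data `g` with all leading coefficients `g_{m,j}(0,0)`
nonzero whose associated series equals `s`. -/
theorem exists_primitive_expression
    {ℓ₁ ℓ : ℕ} (h1 : 1 ≤ ℓ₁) (h2 : ℓ₁ ≤ ℓ)
    (k : Fin ℓ → ℕ)
    (hk1 : ∀ i : Fin ℓ, (i : ℕ) < ℓ₁ → 0 < k i)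
    (hk2 : ∀ i : Fin ℓ, ℓ₁ ≤ (i : ℕ) → k i = 0)
    {A : Type*} [CommRing A]
    (s : ((Fin ℓ → ℤ) × ℕ) → A)
    (hs : ∃ bp, s bp ≠ 0)
    (hbound : ∃ N : ℕ, ∀ b : Fin ℓ → ℤ, ∀ p : ℕ,
      s (b, p) ≠ 0 → ∀ i : Fin ℓ, (p : ℤ) * (k i : ℤ) - (N : ℤ) ≤ b i) :
    ∃ (T : Finset ((Fin ℓ → ℤ) × ℕ))
      (g : (Fin ℓ → ℤ) × ℕ → ((Fin ℓ → ℕ) × ℕ) → A),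
      (∀ mj ∈ T, g mj (0, 0) ≠ 0) ∧ ∀ bp, assocSeries k T g bp = s bp := by
  classical
  obtain ⟨N, hN⟩ := hbound
  set S : Set ((Fin ℓ → ℤ) × ℕ) := {x | s x ≠ 0} with hS
  set r : ((Fin ℓ → ℤ) × ℕ) → ((Fin ℓ → ℤ) × ℕ) → Prop := fun u v =>
    u.2 ≤ v.2 ∧ ∀ i, u.1 i + ((v.2 - u.2 : ℕ) : ℤ) * (k i : ℤ) ≤ v.1 i with hr
  have hrrefl : ∀ x, r x x := by
    intro x
    refine ⟨le_rfl, fun i => ?_⟩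
    simp
  -- the support bound, rephrased
  have hNbd : ∀ x ∈ S, ∀ i, (x.2 : ℤ) * (k i : ℤ) - (N : ℤ) ≤ x.1 i := by
    intro x hx i
    exact hN x.1 x.2 (by simpa [hS] using hx) i
  -- S is partially well ordered by r
  have hpwo : S.PartiallyWellOrderedOn r := by
    have hNat : (Set.univ : Set ((Fin ℓ → ℕ) × ℕ)).IsPWO := by
      have h1' : (Set.univ : Set (Fin ℓ → ℕ)).IsPWO :=
        Set.isPWO_of_wellQuasiOrderedLE _
      have h2' : (Set.univ : Set ℕ).IsPWO :=
        (Set.isWF_univ_iff.mpr ⟨wellFounded_lt⟩).isPWO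
      have := h1'.prod h2'
      rwa [Set.univ_prod_univ] at this
    rw [Set.partiallyWellOrderedOn_iff_exists_lt]
    intro f hf
    set e : ℕ → ((Fin ℓ → ℕ) × ℕ) := fun n =>
      (fun i => ((f n).1 i - ((f n).2 : ℤ) * (k i : ℤ) + (N : ℤ)).toNat, (f n).2) with he
    obtain ⟨m, n, hmn, hle⟩ := hNat.exists_lt (f := e) (fun _ => Set.mem_univ _)
    refine ⟨m, n, hmn, ?_, ?_⟩
    · exact hle.2
    · intro i
      have h1 := hle.1 i
      have hm := hNbd (f m) (hf m) i
      have hn := hNbd (f n) (hf n) i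
      have hmn2 : (f m).2 ≤ (f n).2 := hle.2
      simp only [he] at h1
      have hmpos : (0:ℤ) ≤ (f m).1 i - ((f m).2 : ℤ) * (k i : ℤ) + (N : ℤ) := by linarith
      have hnpos : (0:ℤ) ≤ (f n).1 i - ((f n).2 : ℤ) * (k i : ℤ) + (N : ℤ) := by linarith
      have h2 : (f m).1 i - ((f m).2 : ℤ) * (k i : ℤ) + (N : ℤ) ≤
          (f n).1 i - ((f n).2 : ℤ) * (k i : ℤ) + (N : ℤ) := by
        calc (f m).1 i - ((f m).2 : ℤ) * (k i : ℤ) + (N : ℤ)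
            ≤ ((((f m).1 i - ((f m).2 : ℤ) * (k i : ℤ) + (N : ℤ)).toNat : ℤ)) :=
              Int.self_le_toNat _
          _ ≤ ((((f n).1 i - ((f n).2 : ℤ) * (k i : ℤ) + (N : ℤ)).toNat : ℤ)) := by
              exact_mod_cast h1
          _ = _ := Int.toNat_of_nonneg hnpos
      rw [Nat.cast_sub hmn2, sub_mul]
      linarith
  obtain ⟨T, hTS, hTb⟩ := pwo_exists_finite_basis hpwo
  -- routing function
  set τ : ((Fin ℓ → ℤ) × ℕ) → ((Fin ℓ → ℤ) × ℕ) := fun x =>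
    if hx : x ∈ S then (if x ∈ T then x else (hTb x hx).choose) else x with hτ
  have hτT : ∀ x ∈ T, τ x = x := by
    intro x hx
    simp only [hτ, dif_pos (hTS hx), if_pos hx]
  have hτS : ∀ x ∈ S, τ x ∈ T ∧ r (τ x) x := by
    intro x hx
    by_cases hxT : x ∈ T
    · rw [hτT x hxT]; exact ⟨hxT, hrrefl x⟩
    · simp only [hτ, dif_pos hx, if_neg hxT]
      obtain ⟨h1', h2'⟩ := (hTb x hx).choose_spec
      exact ⟨h1', h2'⟩
  refine ⟨T, fun mj aq =>
      if τ (fun i => mj.1 i + (aq.1 i : ℤ) + (aq.2 : ℤ) * (k i : ℤ), mj.2 + aq.2) = mj then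
        s (fun i => mj.1 i + (aq.1 i : ℤ) + (aq.2 : ℤ) * (k i : ℤ), mj.2 + aq.2)
      else 0, ?_, ?_⟩
  · intro mj hmj
    simp only [Pi.zero_apply, Nat.cast_zero, zero_mul, add_zero, Prod.mk.eta]
    rw [hτT mj hmj, if_pos rfl]
    exact hTS hmj
  · intro bp
    unfold assocSeries
    have key : ∀ mj ∈ T,
        (if mj.2 ≤ bp.2 ∧ ∀ i, mj.1 i + ((bp.2 - mj.2 : ℕ) : ℤ) * (k i : ℤ) ≤ bp.1 i then
          (fun aq : (Fin ℓ → ℕ) × ℕ =>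
            if τ (fun i => mj.1 i + (aq.1 i : ℤ) + (aq.2 : ℤ) * (k i : ℤ), mj.2 + aq.2) = mj then
              s (fun i => mj.1 i + (aq.1 i : ℤ) + (aq.2 : ℤ) * (k i : ℤ), mj.2 + aq.2)
            else 0)
          (fun i => (bp.1 i - mj.1 i - ((bp.2 - mj.2 : ℕ) : ℤ) * (k i : ℤ)).toNat, bp.2 - mj.2)
        else 0) = (if τ bp = mj then s bp else 0) := by
      intro mj hmj
      by_cases hC : mj.2 ≤ bp.2 ∧ ∀ i, mj.1 i + ((bp.2 - mj.2 : ℕ) : ℤ) * (k i : ℤ) ≤ bp.1 i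
      · rw [if_pos hC]
        have hx : ((fun i => mj.1 i +
            (((bp.1 i - mj.1 i - ((bp.2 - mj.2 : ℕ) : ℤ) * (k i : ℤ)).toNat : ℤ)) +
            (((bp.2 - mj.2 : ℕ) : ℤ)) * (k i : ℤ), mj.2 + (bp.2 - mj.2)) : (Fin ℓ → ℤ) × ℕ)
            = bp := by
          refine Prod.ext (funext fun i => ?_) ?_
          · have h := hC.2 i
            dsimp only
            rw [Int.toNat_of_nonneg (by linarith)]
            ring
          · dsimp only
            omega
        simp only [hx]
      · rw [if_neg hC]
        by_cases hτbp : τ bp = mj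
        · exfalso
          by_cases hbpS : bp ∈ S
          · obtain ⟨_, hr2⟩ := hτS bp hbpS
            rw [hτbp] at hr2
            exact hC hr2
          · have : τ bp = bp := by simp only [hτ, dif_neg hbpS]
            rw [this] at hτbp
            exact hbpS (hTS (hτbp ▸ hmj))
        · rw [if_neg hτbp]
    rw [Finset.sum_congr rfl key, Finset.sum_ite_eq T (τ bp) (fun _ => s bp)]
    by_cases hbpS : bp ∈ S
    · rw [if_pos (hτS bp hbpS).1]
    · have : s bp = 0 := not_not.mp hbpS
      rw [this]; simp
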